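/- Consider a semiexplicit descriptor system: E = [[Σ, 0],[0, 0]] and A = [[A11, A12],[A21, A22]] in block form with Σ ∈ ℂ^{r×r} Hermitian positive definite and A22 ∈ ℂ^{(n−r)×(n−r)} invertible, B = [B1; B2] ∈ ℂ^{n×m}, and let 𝒜 = Σ^{-1/2}(A11 − A12 A22^{-1} A21)Σ^{-1/2} and ℬ = Σ^{-1/2}(B1 − A12 A22^{-1} B2) be the reduced coefficients. Then the descriptor system is behaviorally controllable if and only if the reduced standard state-space pair is controllable; that is, rank [λE − A, B] = n for all λ ∈ ℂ if and only if rank [λ I_r − 𝒜, ℬ] = r for all λ ∈ ℂ, where [M, N] denotes the matrix obtained by placing the columns of N to the right of M. -/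

import Mathlib

open Matrix
open scoped ComplexOrder

noncomputable def subProdEquiv {R M M₂ : Type*} [Ring R] [AddCommGroup M] [AddCommGroup M₂]
    [Module R M] [Module R M₂] (p : Submodule R M) (q : Submodule R M₂) :
    (p.prod q) ≃ₗ[R] p × q where
  toFun x := (⟨x.1.1, x.2.1⟩, ⟨x.1.2, x.2.2⟩)
  invFun x := ⟨(x.1.1, x.2.1), x.1.2, x.2.2⟩
  left_inv _ := rfl
  right_inv _ := rfl
  map_add' _ _ := rfl
  map_smul' _ _ := rfl

lemma rank_reindex_rect {l m l' m' : Type*} [Fintype m] [Fintype m']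
    (e₁ : l ≃ l') (e₂ : m ≃ m') (A : Matrix l m ℂ) :
    (Matrix.reindex e₁ e₂ A).rank = A.rank := by
  rw [Matrix.rank, Matrix.rank, Matrix.mulVecLin_reindex, LinearMap.range_comp,
    LinearMap.range_comp, LinearEquiv.range, Submodule.map_top, LinearEquiv.finrank_map_eq]

lemma rank_fromBlocks_diag {n₁ n₂ m₁ m₂ : Type*} [Fintype m₁] [Fintype m₂]
    (P : Matrix n₁ m₁ ℂ) (W : Matrix n₂ m₂ ℂ) :
    (Matrix.fromBlocks P 0 0 W).rank = P.rank + W.rank := by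
  have hcomp : (Matrix.fromBlocks P 0 0 W).mulVecLin =
      ((LinearEquiv.sumArrowLequivProdArrow n₁ n₂ ℂ ℂ).symm.toLinearMap).comp
        ((P.mulVecLin.prodMap W.mulVecLin).comp
          (LinearEquiv.sumArrowLequivProdArrow m₁ m₂ ℂ ℂ).toLinearMap) := by
    apply LinearMap.ext; intro x
    funext i
    cases i <;>
      simp [Matrix.fromBlocks_mulVec, LinearEquiv.sumArrowLequivProdArrow,
        Equiv.sumArrowEquivProdArrow]
  have hr : LinearMap.range (P.mulVecLin.prodMap W.mulVecLin) =
      (LinearMap.range P.mulVecLin).prod (LinearMap.range W.mulVecLin) := by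
    ext ⟨a, b⟩
    simp only [LinearMap.mem_range, Submodule.mem_prod, LinearMap.prodMap_apply, Prod.mk.injEq,
      Prod.exists]
    constructor
    · rintro ⟨u, v, h1, h2⟩; exact ⟨⟨u, h1⟩, ⟨v, h2⟩⟩
    · rintro ⟨⟨u, hu⟩, ⟨v, hv⟩⟩; exact ⟨u, v, hu, hv⟩
  rw [Matrix.rank, hcomp, LinearMap.range_comp, LinearMap.range_comp_of_range_eq_top _
    (LinearEquiv.range _), hr, LinearEquiv.finrank_map_eq,
    (subProdEquiv _ _).finrank_eq, Module.finrank_prod]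
  rfl

lemma rank_special {r s m : ℕ} (X : Matrix (Fin r) (Fin r) ℂ) (Y : Matrix (Fin r) (Fin m) ℂ)
    (W : Matrix (Fin s) (Fin s) ℂ) (hW : IsUnit W) :
    (Matrix.fromCols
      (Matrix.fromBlocks X (0 : Matrix (Fin r) (Fin s) ℂ) (0 : Matrix (Fin s) (Fin r) ℂ) W)
      (Matrix.fromRows Y (0 : Matrix (Fin s) (Fin m) ℂ))).rank
      = s + (Matrix.fromCols X Y).rank := by
  let e : ((Fin r ⊕ Fin s) ⊕ Fin m) ≃ ((Fin r ⊕ Fin m) ⊕ Fin s) :=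
    (Equiv.sumAssoc _ _ _).trans
      ((Equiv.sumCongr (Equiv.refl _) (Equiv.sumComm _ _)).trans (Equiv.sumAssoc _ _ _).symm)
  have h : Matrix.reindex (Equiv.refl (Fin r ⊕ Fin s)) e
      (Matrix.fromCols (Matrix.fromBlocks X 0 0 W) (Matrix.fromRows Y 0))
      = Matrix.fromBlocks (Matrix.fromCols X Y) 0 0 W := by
    ext i j
    rcases j with (j | j) | j <;> rcases i with i | i <;>
      simp [e, Matrix.fromCols]
  have := rank_reindex_rect (Equiv.refl (Fin r ⊕ Fin s)) e
      (Matrix.fromCols (Matrix.fromBlocks X 0 0 W) (Matrix.fromRows Y 0))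
  rw [h] at this
  rw [← this, rank_fromBlocks_diag, Matrix.rank_of_isUnit W hW, Fintype.card_fin, add_comm]

/-- A semiexplicit descriptor system is behaviorally controllable iff the reduced
standard state-space pair `(𝒜, ℬ)` is controllable. -/
theorem semiexplicit_behavioral_controllability
    (r s m : ℕ)
    (Sg : Matrix (Fin r) (Fin r) ℂ) (hSg : Sg.PosDef)
    (A11 : Matrix (Fin r) (Fin r) ℂ) (A12 : Matrix (Fin r) (Fin s) ℂ)
    (A21 : Matrix (Fin s) (Fin r) ℂ) (A22 : Matrix (Fin s) (Fin s) ℂ)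
    (hA22 : IsUnit A22)
    (B1 : Matrix (Fin r) (Fin m) ℂ) (B2 : Matrix (Fin s) (Fin m) ℂ)
    (E : Matrix (Fin r ⊕ Fin s) (Fin r ⊕ Fin s) ℂ)
    (hE : E = Matrix.fromBlocks Sg 0 0 0)
    (A : Matrix (Fin r ⊕ Fin s) (Fin r ⊕ Fin s) ℂ)
    (hA : A = Matrix.fromBlocks A11 A12 A21 A22)
    (B : Matrix (Fin r ⊕ Fin s) (Fin m) ℂ) (hB : B = Matrix.fromRows B1 B2)
    (S : Matrix (Fin r) (Fin r) ℂ) (hS : S = (hSg.posSemidef.1.eigenvectorUnitary : Matrix (Fin r) (Fin r) ℂ) *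
      Matrix.diagonal ((↑) ∘ (Real.sqrt ·) ∘ hSg.posSemidef.1.eigenvalues) *
      (star hSg.posSemidef.1.eigenvectorUnitary : Matrix (Fin r) (Fin r) ℂ))
    (𝒜 : Matrix (Fin r) (Fin r) ℂ) (h𝒜 : 𝒜 = S⁻¹ * (A11 - A12 * A22⁻¹ * A21) * S⁻¹)
    (ℬ : Matrix (Fin r) (Fin m) ℂ) (hℬ : ℬ = S⁻¹ * (B1 - A12 * A22⁻¹ * B2)) :
    (∀ lam : ℂ, (Matrix.fromCols (lam • E - A) B).rank = r + s)
    ↔ (∀ lam : ℂ,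
        (Matrix.fromCols (lam • (1 : Matrix (Fin r) (Fin r) ℂ) - 𝒜) ℬ).rank = r) := by
  -- invertibility facts
  have hA22d : IsUnit A22.det := (Matrix.isUnit_iff_isUnit_det A22).mp hA22
  have hIA : A22⁻¹ * A22 = 1 := Matrix.nonsing_inv_mul A22 hA22d
  have hAI : A22 * A22⁻¹ = 1 := Matrix.mul_nonsing_inv A22 hA22d
  have hSS : S * S = Sg := by
    rw [hS]
    conv_rhs => rw [hSg.posSemidef.1.spectral_theorem, Unitary.conjStarAlgAut_apply]
    have hu := Unitary.coe_star_mul_self hSg.posSemidef.1.eigenvectorUnitary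
    simp only [Matrix.mul_assoc]
    rw [← Matrix.mul_assoc _ (hSg.posSemidef.1.eigenvectorUnitary : Matrix (Fin r) (Fin r) ℂ), hu,
      Matrix.one_mul, ← Matrix.mul_assoc (Matrix.diagonal _), Matrix.diagonal_mul_diagonal]
    congr 3
    funext i
    have hi := hSg.posSemidef.eigenvalues_nonneg i
    simp only [Function.comp_apply]
    rw [← Complex.ofReal_mul, Real.mul_self_sqrt hi]
    rfl
  have hSgd : IsUnit Sg.det := (Matrix.isUnit_iff_isUnit_det Sg).mp hSg.isUnit
  have hSd : IsUnit S.det := by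
    have h1 : S.det * S.det = Sg.det := by rw [← Matrix.det_mul, hSS]
    rw [isUnit_iff_ne_zero] at hSgd ⊢
    intro h0
    rw [← h1, h0, mul_zero] at hSgd
    exact hSgd rfl
  have hSId : IsUnit (S⁻¹).det := S.isUnit_nonsing_inv_det hSd
  have hSI : S⁻¹ * S = 1 := Matrix.nonsing_inv_mul S hSd
  have hIS : S * S⁻¹ = 1 := Matrix.mul_nonsing_inv S hSd
  have hSgS : S⁻¹ * Sg * S⁻¹ = 1 := by
    rw [← hSS, ← Matrix.mul_assoc, Matrix.mul_assoc (S⁻¹ * S), hSI, Matrix.one_mul, hIS]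
  set C : Matrix (Fin r) (Fin r) ℂ := A11 - A12 * A22⁻¹ * A21 with hC
  set Y : Matrix (Fin r) (Fin m) ℂ := B1 - A12 * A22⁻¹ * B2 with hY
  have main : ∀ lam : ℂ, (Matrix.fromCols (lam • E - A) B).rank
      = s + (Matrix.fromCols (lam • (1 : Matrix (Fin r) (Fin r) ℂ) - 𝒜) ℬ).rank := by
    intro lam
    set X : Matrix (Fin r) (Fin r) ℂ := lam • Sg - C with hX
    -- the row-operation matrix
    set L : Matrix (Fin r ⊕ Fin s) (Fin r ⊕ Fin s) ℂ :=
      Matrix.fromBlocks 1 (-(A12 * A22⁻¹)) 0 1 with hL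
    have hLdet : IsUnit L.det := by
      rw [hL, Matrix.det_fromBlocks_zero₂₁, Matrix.det_one, Matrix.det_one, one_mul]
      exact isUnit_one
    -- the column-operation matrix
    set Rm : Matrix ((Fin r ⊕ Fin s) ⊕ Fin m) ((Fin r ⊕ Fin s) ⊕ Fin m) ℂ :=
      Matrix.fromBlocks (Matrix.fromBlocks 1 0 (-(A22⁻¹ * A21)) 1)
        (Matrix.fromRows 0 (A22⁻¹ * B2)) 0 1 with hRm
    have hRdet : IsUnit Rm.det := by
      rw [hRm, Matrix.det_fromBlocks_zero₂₁, Matrix.det_fromBlocks_zero₁₂,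
        Matrix.det_one, Matrix.det_one, Matrix.det_one]
      simp
    have hEA : lam • E - A = Matrix.fromBlocks (lam • Sg - A11) (-A12) (-A21) (-A22) := by
      rw [hE, hA]
      ext i j
      rcases i with i | i <;> rcases j with j | j <;> simp
    have hAI' : ∀ {k : ℕ} (Z : Matrix (Fin s) (Fin k) ℂ), A22 * (A22⁻¹ * Z) = Z := by
      intro k Z; rw [← Matrix.mul_assoc, hAI, Matrix.one_mul]
    have hSgS' : S⁻¹ * (Sg * S⁻¹) = 1 := by rw [← Matrix.mul_assoc, hSgS]
    have hfra : ∀ (P Q : Matrix (Fin r) (Fin m) ℂ) (P' Q' : Matrix (Fin s) (Fin m) ℂ),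
        Matrix.fromRows P P' + Matrix.fromRows Q Q' = Matrix.fromRows (P + Q) (P' + Q') := by
      intro P Q P' Q'
      ext i j
      rcases i with i | i <;> simp
    have hLM : L * (Matrix.fromCols (lam • E - A) B)
        = Matrix.fromCols (Matrix.fromBlocks X 0 (-A21) (-A22))
            (Matrix.fromRows Y B2) := by
      rw [Matrix.mul_fromCols, hEA, hB, hL, Matrix.fromBlocks_multiply,
        Matrix.fromBlocks_mul_fromRows]
      simp only [hX, hC, hY, Matrix.mul_assoc, Matrix.one_mul, Matrix.zero_mul,
        Matrix.mul_one, Matrix.mul_zero, zero_add, add_zero, Matrix.neg_mul,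
        Matrix.mul_neg, neg_neg, neg_zero, hIA, hAI', sub_eq_add_neg, neg_add, add_assoc,
        neg_add_cancel, neg_add_cancel_left]
    have hMR : (Matrix.fromCols (Matrix.fromBlocks X 0 (-A21) (-A22))
          (Matrix.fromRows Y B2)) * Rm
        = Matrix.fromCols (Matrix.fromBlocks X 0 0 (-A22)) (Matrix.fromRows Y 0) := by
      rw [hRm, Matrix.fromCols_mul_fromBlocks, Matrix.fromBlocks_multiply,
        Matrix.fromBlocks_mul_fromRows]
      simp only [hfra, Matrix.mul_assoc, Matrix.one_mul, Matrix.zero_mul,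
        Matrix.mul_one, Matrix.mul_zero, zero_add, add_zero, Matrix.neg_mul,
        Matrix.mul_neg, neg_neg, neg_zero, hIA, hAI', neg_add_cancel]
    have hred : Matrix.fromCols (lam • (1 : Matrix (Fin r) (Fin r) ℂ) - 𝒜) ℬ
        = S⁻¹ * (Matrix.fromCols X Y) *
          Matrix.fromBlocks S⁻¹ (0 : Matrix (Fin r) (Fin m) ℂ)
            (0 : Matrix (Fin m) (Fin r) ℂ) (1 : Matrix (Fin m) (Fin m) ℂ) := by
      rw [Matrix.mul_fromCols, Matrix.fromCols_mul_fromBlocks]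
      simp only [h𝒜, hℬ, hX, hC, hY, Matrix.mul_assoc, Matrix.mul_zero, Matrix.zero_mul,
        zero_add, add_zero, Matrix.mul_one, Matrix.one_mul, Matrix.mul_sub, Matrix.sub_mul,
        Matrix.mul_smul, Matrix.smul_mul, Matrix.add_mul, Matrix.mul_add, Matrix.neg_mul,
        Matrix.mul_neg, hSgS', sub_eq_add_neg, neg_add, neg_neg, neg_zero, add_assoc]
    calc (Matrix.fromCols (lam • E - A) B).rank
        = (L * Matrix.fromCols (lam • E - A) B).rank :=
          (Matrix.rank_mul_eq_right_of_isUnit_det L _ hLdet).symm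
      _ = ((L * Matrix.fromCols (lam • E - A) B) * Rm).rank :=
          (Matrix.rank_mul_eq_left_of_isUnit_det Rm _ hRdet).symm
      _ = (Matrix.fromCols (Matrix.fromBlocks X 0 0 (-A22))
            (Matrix.fromRows Y 0)).rank := by rw [hLM, hMR]
      _ = s + (Matrix.fromCols X Y).rank := rank_special X Y (-A22) hA22.neg
      _ = s + (Matrix.fromCols (lam • (1 : Matrix (Fin r) (Fin r) ℂ) - 𝒜) ℬ).rank := by
          rw [hred, Matrix.rank_mul_eq_left_of_isUnit_det _ _
            (by rw [Matrix.det_fromBlocks_zero₂₁, Matrix.det_one, mul_one]; exact hSId),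
            Matrix.rank_mul_eq_right_of_isUnit_det _ _ hSId]
  constructor <;> intro h lam <;> have h1 := main lam <;> have h2 := h lam <;> omega
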